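/- Let G=(V,E) be a finite simple graph with no isolated vertices, let B ⊆ P ⊆ V, and let S ⊆ P be nonempty. Write S_B = S ∩ B, S̄_B = B ∖ S, S_P = S ∖ B, and suppose vol_G(S_B) ≤ vol_G(B)/2. Let ℓ ≥ 1 and 0 < ε < 1 be reals, and let ξ > 0 satisfy: if S_P ≠ ∅ then ξ ≤ φ_G(S_P), and if S_B ≠ ∅ then ξ ≤ max{φ_G(S_B), φ_G(S̄_B)}. Suppose further: (1) if S_P ≠ ∅ then e(S_P, P) ≥ e(S_P, V)/ℓ; (2) if S_B ≠ ∅ then min{φ(S_B, B), φ(S̄_B, B)} ≥ ε/3. Then φ_G(S) ≥ φ_{G[P]}(S) ≥ εξ/(14ℓ). -/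

import Mathlib

open Classical

noncomputable section

namespace Paper

variable {V : Type*}

/-- The degree of a vertex. -/
def deg (G : SimpleGraph V) (v : V) : ℕ := (G.neighborSet v).ncard

/-- The volume of a vertex set: the sum of the degrees of its vertices. -/
def vol (G : SimpleGraph V) (S : Set V) : ℕ := ∑ᶠ v ∈ S, deg G v

/-- The edge boundary ∂(S): edges of `G` with exactly one endpoint in `S`. -/
def bdry (G : SimpleGraph V) (S : Set V) : Set (Sym2 V) :=
  {e | e ∈ G.edgeSet ∧ (∃ u ∈ e, u ∈ S) ∧ (∃ v ∈ e, v ∉ S)}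

/-- The closure ∇(S): edges of `G` with at least one endpoint in `S`. -/
def cl (G : SimpleGraph V) (S : Set V) : Set (Sym2 V) :=
  {e | e ∈ G.edgeSet ∧ ∃ u ∈ e, u ∈ S}

/-- The conductance φ_G(S) = |∂(S)| / vol_G(S). -/
def cond (G : SimpleGraph V) (S : Set V) : ℝ :=
  ((bdry G S).ncard : ℝ) / (vol G S : ℝ)

/-- The conductance φ(G) of the graph: the minimum of φ_G(S) over nonempty S
with vol_G(S) ≤ vol_G(V)/2. -/
def graphCond [Fintype V] (G : SimpleGraph V) : ℝ :=
  sInf {x : ℝ | ∃ S : Set V, S.Nonempty ∧ 2 * vol G S ≤ vol G Set.univ ∧ x = cond G S}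

/-- The induced subgraph G[P], realised as a graph on the same vertex set
(vertices outside `P` are isolated). -/
def restrict (G : SimpleGraph V) (P : Set V) : SimpleGraph V where
  Adj u v := G.Adj u v ∧ u ∈ P ∧ v ∈ P
  symm := ⟨fun _ _ h => ⟨h.1.symm, h.2.2, h.2.1⟩⟩
  loopless := ⟨fun u h => G.loopless.irrefl u h.1⟩

/-- e(S,T): the number of edges of `G` with one endpoint in `S` and the other in `T \ S`. -/
def eCount (G : SimpleGraph V) (S T : Set V) : ℕ :=
  ({e | e ∈ G.edgeSet ∧ ∃ u v, e = s(u, v) ∧ u ∈ S ∧ v ∈ T \ S}).ncard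

/-- φ(S,B) = e(S,B) / ((vol(B∖S)/vol(B)) · e(S, V∖B)). -/
def condPair (G : SimpleGraph V) (S B : Set V) : ℝ :=
  (eCount G S B : ℝ) /
    (((vol G (B \ S) : ℝ) / (vol G B : ℝ)) * (eCount G S (Set.univ \ B) : ℝ))

/-- An edge is monochromatic under a colouring if all its endpoints get the same colour. -/
def Mono {q : ℕ} (χ : V → Fin q) (e : Sym2 V) : Prop :=
  ∀ u ∈ e, ∀ v ∈ e, χ u = χ v

/-- The number of edges in `F` that are monochromatic under `χ`. -/
def monoCount {q : ℕ} (χ : V → Fin q) (F : Set (Sym2 V)) : ℕ :=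
  {e ∈ F | Mono χ e}.ncard

/-- m_G(χ): the number of monochromatic edges of `G` under `χ`. -/
def mG {q : ℕ} (G : SimpleGraph V) (χ : V → Fin q) : ℕ := monoCount χ G.edgeSet

/-- The q-colour Potts model partition function. -/
def Z [Fintype V] [DecidableEq V] (G : SimpleGraph V) (q : ℕ) (β : ℝ) : ℝ :=
  ∑ ω : V → Fin q, Real.exp (β * (mG G ω : ℝ))

/-- P_1, …, P_ℓ form a partition of the vertex set. -/
def IsPartition {ℓ : ℕ} (P : Fin ℓ → Set V) : Prop :=
  (∀ i j : Fin ℓ, i ≠ j → Disjoint (P i) (P j)) ∧ (⋃ i, P i) = Set.univ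

/-- A set is small (w.r.t. the partition P) if |S ∩ P i| ≤ |P i|/2 for all i. -/
def Small {ℓ : ℕ} (P : Fin ℓ → Set V) (S : Set V) : Prop :=
  ∀ i, ((S ∩ P i).ncard : ℝ) ≤ ((P i).ncard : ℝ) / 2

/-- A set U is sparse if the vertex set of every connected component of G[U] is small. -/
def Sparse {ℓ : ℕ} (G : SimpleGraph V) (P : Fin ℓ → Set V) (U : Set V) : Prop :=
  ∀ u ∈ U, Small P {v | (restrict G U).Reachable u v}

/-- Every `S ⊆ P i` with `|S| ≤ |P i|/2` satisfies `|∂_{G[P i]}(S)| ≥ α |S|`. -/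
def PartExpansion {ℓ : ℕ} (G : SimpleGraph V) (P : Fin ℓ → Set V) (α : ℝ) : Prop :=
  ∀ i, ∀ S ⊆ P i, (S.ncard : ℝ) ≤ ((P i).ncard : ℝ) / 2 →
    α * (S.ncard : ℝ) ≤ ((bdry (restrict G (P i)) S).ncard : ℝ)

/-- A ground state: a colouring constant on each part of the partition. -/
def GroundState {q ℓ : ℕ} (P : Fin ℓ → Set V) (ψ : V → Fin q) : Prop :=
  ∀ i : Fin ℓ, ∀ u ∈ P i, ∀ v ∈ P i, ψ u = ψ v

/-- A state ω is close to a ground state ψ if on each part, more than half of the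
vertices agree with ψ. -/
def CloseTo {q ℓ : ℕ} (P : Fin ℓ → Set V) (ω ψ : V → Fin q) : Prop :=
  ∀ i : Fin ℓ, ((P i).ncard : ℝ) / 2 < ((P i ∩ {v | ω v = ψ v}).ncard : ℝ)

/-- Z*: the contribution to Z from states close to some ground state. -/
def Zstar [Fintype V] [DecidableEq V] {ℓ : ℕ} (G : SimpleGraph V) (P : Fin ℓ → Set V)
    (q : ℕ) (β : ℝ) : ℝ :=
  ∑ ω : V → Fin q,
    if ∃ ψ : V → Fin q, GroundState P ψ ∧ CloseTo P ω ψ then Real.exp (β * (mG G ω : ℝ)) else 0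

/-- The colouring of V that colours γ by `lam` and everything else by `ψ`. -/
def combine {q : ℕ} (γ : Set V) (ψ : V → Fin q) (lam : γ → Fin q) : V → Fin q :=
  fun v => if h : v ∈ γ then lam ⟨v, h⟩ else ψ v

/-- m_G(ψ, γ, λ): the number of edges of ∇(γ) that are monochromatic when γ is
coloured by λ and all other vertices by ψ. -/
def mRes {q : ℕ} (G : SimpleGraph V) (γ : Set V) (ψ : V → Fin q) (lam : γ → Fin q) : ℕ :=
  monoCount (combine γ ψ lam) (cl G γ)

/-- A polymer: a nonempty small set inducing a connected subgraph. -/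
def Polymer {ℓ : ℕ} (G : SimpleGraph V) (P : Fin ℓ → Set V) (γ : Set V) : Prop :=
  γ.Nonempty ∧ (G.induce γ).Connected ∧ Small P γ

/-- Two polymers are compatible if they are disjoint with disjoint edge boundaries. -/
def Compatible (G : SimpleGraph V) (γ γ' : Set V) : Prop :=
  Disjoint γ γ' ∧ Disjoint (bdry G γ) (bdry G γ')

/-- The family of vertex sets of connected components of G[U]. -/
def components (G : SimpleGraph V) (U : Set V) : Set (Set V) :=
  {C | ∃ u ∈ U, C = {v | (restrict G U).Reachable u v}}

/-- Edges with one endpoint in A, the other in B. -/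
def EE (G : SimpleGraph V) (A B : Set V) : Set (Sym2 V) :=
  {e | e ∈ G.edgeSet ∧ ∃ u v, e = s(u, v) ∧ u ∈ A ∧ v ∈ B}

lemma eCount_eq (G : SimpleGraph V) (S T : Set V) :
    eCount G S T = (EE G S (T \ S)).ncard := rfl

lemma EE_symm (G : SimpleGraph V) (A B : Set V) : EE G A B = EE G B A := by
  ext e
  simp only [EE, Set.mem_setOf_eq]
  constructor <;> rintro ⟨he, u, v, rfl, hu, hv⟩ <;>
    exact ⟨by simpa [Sym2.eq_swap] using he, v, u, Sym2.eq_swap, hv, hu⟩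

lemma EE_mono (G : SimpleGraph V) (A : Set V) {B B' : Set V} (h : B ⊆ B') :
    EE G A B ⊆ EE G A B' := by
  rintro e ⟨he, u, v, rfl, hu, hv⟩
  exact ⟨he, u, v, rfl, hu, h hv⟩

lemma EE_union_right (G : SimpleGraph V) (A B C : Set V) :
    EE G A (B ∪ C) = EE G A B ∪ EE G A C := by
  ext e
  constructor
  · rintro ⟨he, u, v, rfl, hu, hv | hv⟩
    · exact Or.inl ⟨he, u, v, rfl, hu, hv⟩
    · exact Or.inr ⟨he, u, v, rfl, hu, hv⟩
  · rintro (⟨he, u, v, rfl, hu, hv⟩ | ⟨he, u, v, rfl, hu, hv⟩)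
    · exact ⟨he, u, v, rfl, hu, Or.inl hv⟩
    · exact ⟨he, u, v, rfl, hu, Or.inr hv⟩

lemma EE_empty (G : SimpleGraph V) (A : Set V) : EE G A ∅ = ∅ := by
  ext e; simp [EE]

lemma EE_disjoint_right (G : SimpleGraph V) {A B C : Set V} (hAB : Disjoint A B)
    (hBC : Disjoint B C) : Disjoint (EE G A B) (EE G A C) := by
  rw [Set.disjoint_left]
  rintro e ⟨he, u, v, rfl, hu, hv⟩ ⟨he', u', v', heq, hu', hv'⟩
  rw [Sym2.eq_iff] at heq
  rcases heq with ⟨rfl, rfl⟩ | ⟨rfl, rfl⟩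
  · exact (hBC.ne_of_mem hv hv') rfl
  · exact (hAB.ne_of_mem hu' hv) rfl

lemma EE_disjoint_left (G : SimpleGraph V) {A B C : Set V} (hAC : Disjoint A C)
    (hAB : Disjoint A B) : Disjoint (EE G A C) (EE G B C) := by
  rw [EE_symm G A C, EE_symm G B C]
  exact EE_disjoint_right G hAC.symm hAB

lemma bdry_eq_EE (G : SimpleGraph V) (A : Set V) : bdry G A = EE G A Aᶜ := by
  ext e
  induction e using Sym2.inductionOn with
  | hf x y =>
    constructor
    · rintro ⟨he, ⟨u, hue, hu⟩, ⟨v, hve, hv⟩⟩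
      rw [Sym2.mem_iff] at hue hve
      rcases hue with rfl | rfl <;> rcases hve with rfl | rfl
      · exact absurd hu hv
      · exact ⟨he, u, v, rfl, hu, hv⟩
      · exact ⟨he, u, v, Sym2.eq_swap, hu, hv⟩
      · exact absurd hu hv
    · rintro ⟨he, u, v, heq, hu, hv⟩
      exact ⟨he, ⟨u, by rw [heq]; exact Sym2.mem_mk_left u v, hu⟩,
        ⟨v, by rw [heq]; exact Sym2.mem_mk_right u v, hv⟩⟩

lemma bdry_restrict_eq_EE (G : SimpleGraph V) {P S : Set V} (hSP : S ⊆ P) :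
    bdry (restrict G P) S = EE G S (P \ S) := by
  ext e
  induction e using Sym2.inductionOn with
  | hf x y =>
    constructor
    · rintro ⟨he, ⟨u, hue, hu⟩, ⟨v, hve, hv⟩⟩
      rw [SimpleGraph.mem_edgeSet] at he
      obtain ⟨hadj, hxP, hyP⟩ := he
      rw [Sym2.mem_iff] at hue hve
      rcases hue with rfl | rfl <;> rcases hve with rfl | rfl
      · exact absurd hu hv
      · refine ⟨?_, u, v, rfl, hu, ⟨hyP, hv⟩⟩
        rw [SimpleGraph.mem_edgeSet]; exact hadj
      · refine ⟨?_, u, v, Sym2.eq_swap, hu, ⟨hxP, hv⟩⟩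
        rw [SimpleGraph.mem_edgeSet]; exact hadj
      · exact absurd hu hv
    · rintro ⟨he, u, v, heq, hu, hv⟩
      rw [heq] at he ⊢
      rw [SimpleGraph.mem_edgeSet] at he
      refine ⟨?_, ⟨u, Sym2.mem_mk_left u v, hu⟩, ⟨v, Sym2.mem_mk_right u v, hv.2⟩⟩
      rw [SimpleGraph.mem_edgeSet]
      exact ⟨he, hSP hu, hv.1⟩


section fin
variable [Fintype V]

lemma vol_eq_sum (G : SimpleGraph V) (S : Set V) :
    vol G S = ∑ v ∈ (Set.toFinite S).toFinset, deg G v := by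
  rw [vol, ← finsum_mem_coe_finset, Set.Finite.coe_toFinset]

lemma vol_union (G : SimpleGraph V) {A B : Set V} (h : Disjoint A B) :
    vol G (A ∪ B) = vol G A + vol G B := by
  unfold vol
  exact finsum_mem_union h (Set.toFinite A) (Set.toFinite B)

lemma vol_empty (G : SimpleGraph V) : vol G (∅ : Set V) = 0 := by
  unfold vol; exact finsum_mem_empty

lemma vol_pos (G : SimpleGraph V) (hiso : ∀ v : V, 0 < deg G v) {S : Set V}
    (hS : S.Nonempty) : 0 < vol G S := by
  rw [vol_eq_sum]
  refine Finset.sum_pos (fun i _ => hiso i) ?_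
  obtain ⟨a, ha⟩ := hS
  exact ⟨a, (Set.Finite.mem_toFinset _).2 ha⟩

lemma DC (G : SimpleGraph V) {A B : Set V} (hAB : Disjoint A B) :
    (EE G A B).ncard = ∑ v ∈ (Set.toFinite A).toFinset, (G.neighborSet v ∩ B).ncard := by
  classical
  set Af := (Set.toFinite A).toFinset with hAf
  set Bf := (Set.toFinite B).toFinset with hBf
  have hmemA : ∀ x, x ∈ Af ↔ x ∈ A := fun x => Set.Finite.mem_toFinset _
  have hmemB : ∀ x, x ∈ Bf ↔ x ∈ B := fun x => Set.Finite.mem_toFinset _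
  have key : EE G A B
      = ↑(((Af ×ˢ Bf).filter fun p => G.Adj p.1 p.2).image fun p => s(p.1, p.2)) := by
    ext e
    simp only [Finset.coe_image, Set.mem_image, Finset.mem_coe, Finset.mem_filter,
      Finset.mem_product, hmemA, hmemB]
    constructor
    · rintro ⟨he, u, v, rfl, hu, hv⟩
      rw [SimpleGraph.mem_edgeSet] at he
      exact ⟨(u, v), ⟨⟨hu, hv⟩, he⟩, rfl⟩
    · rintro ⟨⟨u, v⟩, ⟨⟨hu, hv⟩, hadj⟩, rfl⟩
      refine ⟨?_, u, v, rfl, hu, hv⟩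
      rw [SimpleGraph.mem_edgeSet]; exact hadj
  have hinj : Set.InjOn (fun p : V × V => s(p.1, p.2))
      ↑((Af ×ˢ Bf).filter fun p => G.Adj p.1 p.2) := by
    rintro ⟨u, v⟩ h1 ⟨u', v'⟩ h2 heq
    simp only [Finset.coe_filter, Set.mem_setOf_eq, Finset.mem_product, hmemA, hmemB] at h1 h2
    simp only [Sym2.eq_iff] at heq
    rcases heq with ⟨rfl, rfl⟩ | ⟨rfl, rfl⟩
    · rfl
    · exact absurd rfl (hAB.ne_of_mem h2.1.1 h1.1.2)
  rw [key, Set.ncard_coe_finset, Finset.card_image_of_injOn hinj, Finset.card_filter,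
    Finset.sum_product]
  refine Finset.sum_congr rfl fun v _ => ?_
  have hset : G.neighborSet v ∩ B = ↑(Bf.filter fun w => G.Adj v w) := by
    ext w
    simp only [Finset.coe_filter, Set.mem_setOf_eq, hmemB, Set.mem_inter_iff,
      SimpleGraph.mem_neighborSet]
    tauto
  rw [hset, Set.ncard_coe_finset, Finset.card_filter]

lemma neighborSet_restrict (G : SimpleGraph V) {P : Set V} {v : V} (hv : v ∈ P) :
    (restrict G P).neighborSet v = G.neighborSet v ∩ P := by
  ext w
  simp only [SimpleGraph.mem_neighborSet, Set.mem_inter_iff, restrict]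
  tauto

lemma vol_restrict_add (G : SimpleGraph V) {S P : Set V} (hSP : S ⊆ P) :
    vol G S = vol (restrict G P) S + (EE G S Pᶜ).ncard := by
  have hd : Disjoint S Pᶜ := Set.disjoint_left.2 fun a ha hc => hc (hSP ha)
  rw [vol_eq_sum, vol_eq_sum, DC G hd, ← Finset.sum_add_distrib]
  refine Finset.sum_congr rfl fun v hv => ?_
  have hvP : v ∈ P := hSP ((Set.Finite.mem_toFinset _).1 hv)
  have : deg (restrict G P) v = (G.neighborSet v ∩ P).ncard := by
    rw [deg, neighborSet_restrict G hvP]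
  rw [this, deg, ← Set.diff_eq]
  exact (Set.ncard_inter_add_ncard_diff_eq_ncard (G.neighborSet v) P).symm

lemma EE_le_vol_restrict (G : SimpleGraph V) {S P : Set V} (hSP : S ⊆ P) :
    (EE G S (P \ S)).ncard ≤ vol (restrict G P) S := by
  have hd : Disjoint S (P \ S) := Set.disjoint_left.2 fun a ha hc => hc.2 ha
  rw [vol_eq_sum, DC G hd]
  refine Finset.sum_le_sum fun v hv => ?_
  have hvP : v ∈ P := hSP ((Set.Finite.mem_toFinset _).1 hv)
  have : deg (restrict G P) v = (G.neighborSet v ∩ P).ncard := by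
    rw [deg, neighborSet_restrict G hvP]
  rw [this]
  exact Set.ncard_le_ncard (Set.inter_subset_inter_right _ Set.diff_subset) (Set.toFinite _)

lemma EE_ncard_union (G : SimpleGraph V) {A B C : Set V} (hAB : Disjoint A B)
    (hBC : Disjoint B C) :
    (EE G A (B ∪ C)).ncard = (EE G A B).ncard + (EE G A C).ncard := by
  rw [EE_union_right]
  exact Set.ncard_union_eq (EE_disjoint_right G hAB hBC) (Set.toFinite _) (Set.toFinite _)

end fin

section arith
variable {e x l t T s Ein Eout Fout aB aP g a b r c : ℝ}

lemma arith_pos_aux (h14 : 0 < x) (h : 0 < x * a) : 0 < a := by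
  by_contra hc; push_neg at hc; nlinarith

lemma arith_concl1 (ha : 0 ≤ a) (hc : 0 ≤ c) (har : a ≤ r) : a * (r + c) ≤ (a + c) * r := by
  nlinarith

lemma arith_concl2 (he : 0 < e) (hx : 0 < x) (hrb : r ≤ b) (hmain : e * x * b ≤ 14 * l * a) :
    e * x * r ≤ a * (14 * l) := by
  nlinarith [mul_le_mul_of_nonneg_left hrb (mul_nonneg he.le hx.le)]

lemma arith_claim1 (he0 : 0 < e) (he1 : e < 1) (hx : 0 < x)
    (htpos : 0 < t) (hTt : t ≤ T / 2) (hTpos : 0 < T)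
    (hEin0 : 0 ≤ Ein) (hEout0 : 0 < Eout) (hFout0 : 0 < Fout)
    (hE1 : e / 3 * ((T - t) / T * Eout) ≤ Ein)
    (hE2 : e / 3 * (t / T * Fout) ≤ Ein)
    (hmax : x ≤ (Ein + Eout) / t ∨ x ≤ (Ein + Fout) / (T - t)) :
    e * x * t ≤ 7 * Ein ∧ e * Eout ≤ 6 * Ein := by
  have hTtpos : (0:ℝ) < T - t := by linarith
  have hu1half : (1:ℝ) / 2 ≤ (T - t) / T := by rw [le_div_iff₀ hTpos]; linarith
  have e1 : e * Eout ≤ 6 * Ein := by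
    have h' : e / 3 * (1 / 2 * Eout) ≤ e / 3 * ((T - t) / T * Eout) := by
      apply mul_le_mul_of_nonneg_left _ (by linarith)
      exact mul_le_mul_of_nonneg_right hu1half hEout0.le
    nlinarith
  have e2 : e * t * Fout ≤ 3 * T * Ein := by
    have h' : e / 3 * (t / T * Fout) * T ≤ Ein * T :=
      mul_le_mul_of_nonneg_right hE2 hTpos.le
    have heq : e / 3 * (t / T * Fout) * T = e / 3 * Fout * (t / T * T) := by ring
    rw [heq, div_mul_cancel₀ _ (ne_of_gt hTpos)] at h'
    nlinarith
  refine ⟨?_, e1⟩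
  rcases hmax with hb | hb
  · have h' : x * t ≤ Ein + Eout := (le_div_iff₀ htpos).1 hb
    nlinarith [mul_le_mul_of_nonneg_left h' he0.le]
  · have hb' : x * (T - t) ≤ Ein + Fout := (le_div_iff₀ hTtpos).1 hb
    have k1 : e * t * (x * (T - t)) ≤ e * t * Ein + e * t * Fout := by
      nlinarith [mul_le_mul_of_nonneg_left hb' (mul_nonneg he0.le htpos.le)]
    have het : e * t ≤ T / 2 := by nlinarith
    have k2 : e * t * Ein ≤ T / 2 * Ein := by
      have := mul_le_mul_of_nonneg_right het hEin0
      nlinarith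
    have k3 : e * x * t * (T / 2) ≤ e * t * (x * (T - t)) := by
      nlinarith [mul_nonneg (mul_nonneg (mul_nonneg he0.le hx.le) htpos.le) (by linarith : (0:ℝ) ≤ T / 2 - t)]
    have k4 : e * x * t * (T / 2) ≤ 7 * T / 2 * Ein := by linarith
    nlinarith
lemma arith_caseA (he0 : 0 < e) (he1 : e < 1) (hx : 0 < x) (hl : 1 ≤ l)
    (hs : 0 ≤ s) (haB : 0 ≤ aB) (haP : 0 ≤ aP) (c2 : x * s ≤ l * aP) :
    e * x * s ≤ 14 * l * (aB + aP) := by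
  nlinarith [mul_nonneg hx.le hs, mul_nonneg (by linarith : (0:ℝ) ≤ l) haB,
    mul_nonneg (by linarith : (0:ℝ) ≤ l) haP]

lemma arith_caseB (hl : 1 ≤ l) (haB : 0 ≤ aB) (haP : 0 ≤ aP)
    (c1 : e * x * t ≤ 7 * Ein) (hF2 : Ein ≤ aB) :
    e * x * t ≤ 14 * l * (aB + aP) := by
  nlinarith [mul_nonneg (by linarith : (0:ℝ) ≤ 2 * l - 1) haB,
    mul_nonneg (by linarith : (0:ℝ) ≤ l) haP]

lemma arith_caseC (he0 : 0 < e) (he1 : e < 1) (hx : 0 < x) (hl : 1 ≤ l)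
    (ht : 0 ≤ t) (hs : 0 ≤ s) (hEin0 : 0 ≤ Ein) (hEout0 : 0 ≤ Eout)
    (haB : 0 ≤ aB) (haP : 0 ≤ aP) (hg0 : 0 ≤ g)
    (c1 : e * x * t ≤ 7 * Ein) (e1 : e * Eout ≤ 6 * Ein)
    (c2 : x * s ≤ l * (aP + g)) (hg : g ≤ Eout) (hF2 : Ein ≤ aB) :
    e * x * (t + s) ≤ 14 * l * (aB + aP) := by
  have hl0 : (0:ℝ) ≤ l := by linarith
  have m1 : e * (x * s) ≤ e * (l * (aP + g)) := mul_le_mul_of_nonneg_left c2 he0.le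
  have m2 : e * g ≤ 6 * Ein := by nlinarith [mul_le_mul_of_nonneg_left hg he0.le]
  have m3 : e * aP ≤ aP := by nlinarith
  have m4 : l * (e * aP + e * g) ≤ l * (aP + 6 * Ein) :=
    mul_le_mul_of_nonneg_left (by linarith) hl0
  have m5 : e * x * s ≤ l * aP + 6 * (l * Ein) := by nlinarith [m1, m4]
  have m6 : l * Ein ≤ l * aB := mul_le_mul_of_nonneg_left hF2 hl0
  have p1 : 0 ≤ (l - 1) * aB := mul_nonneg (by linarith) haB
  have p2 : 0 ≤ l * aB := mul_nonneg hl0 haB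
  have p3 : 0 ≤ l * aP := mul_nonneg hl0 haP
  nlinarith [c1, hF2, m5, m6, p1, p2, p3]

end arith

set_option maxHeartbeats 2000000 in
/-- Lemma 2.6 of Oveis Gharan–Trevisan: φ_G(S) ≥ φ_{G[P]}(S) ≥ εξ/(14ℓ). -/
theorem statement15 [Fintype V] (G : SimpleGraph V) (hiso : ∀ v : V, 0 < deg G v)
    (B P : Set V) (hBP : B ⊆ P) (S : Set V) (hSP : S ⊆ P) (hSne : S.Nonempty)
    (hvolSB : (vol G (S ∩ B) : ℝ) ≤ (vol G B : ℝ) / 2)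
    (ℓ ε ξ : ℝ) (hℓ : 1 ≤ ℓ) (hε0 : 0 < ε) (hε1 : ε < 1) (hξ : 0 < ξ)
    (hξP : (S \ B).Nonempty → ξ ≤ cond G (S \ B))
    (hξB : (S ∩ B).Nonempty → ξ ≤ max (cond G (S ∩ B)) (cond G (B \ S)))
    (h1 : (S \ B).Nonempty →
      (eCount G (S \ B) Set.univ : ℝ) / ℓ ≤ (eCount G (S \ B) P : ℝ))
    (h2 : (S ∩ B).Nonempty →
      ε / 3 ≤ min (condPair G (S ∩ B) B) (condPair G (B \ S) B)) :
    cond (restrict G P) S ≤ cond G S ∧ ε * ξ / (14 * ℓ) ≤ cond (restrict G P) S := by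

  classical
  -- set identities
  have i1 : B \ (S ∩ B) = B \ S := by ext x; simp only [Set.mem_diff, Set.mem_inter_iff]; tauto
  have i2 : (Set.univ \ B) \ (S ∩ B) = Bᶜ := by
    ext x; simp only [Set.mem_diff, Set.mem_inter_iff, Set.mem_univ, Set.mem_compl_iff]; tauto
  have i3 : B \ (B \ S) = S ∩ B := by
    ext x; simp only [Set.mem_diff, Set.mem_inter_iff]; tauto
  have i4 : (Set.univ \ B) \ (B \ S) = Bᶜ := by
    ext x; simp only [Set.mem_diff, Set.mem_univ, Set.mem_compl_iff]; tauto
  have i5 : (S ∩ B)ᶜ = (B \ S) ∪ Bᶜ := by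
    ext x; simp only [Set.mem_compl_iff, Set.mem_inter_iff, Set.mem_union, Set.mem_diff]; tauto
  have i6 : (B \ S)ᶜ = (S ∩ B) ∪ Bᶜ := by
    ext x; simp only [Set.mem_compl_iff, Set.mem_inter_iff, Set.mem_union, Set.mem_diff]; tauto
  have i7 : Set.univ \ (S \ B) = (S \ B)ᶜ := by
    ext x; simp only [Set.mem_diff, Set.mem_univ, Set.mem_compl_iff]; tauto
  have i8 : P \ (S \ B) = (P \ S) ∪ (S ∩ B) := by
    ext x
    have hx := @hBP x
    have hx2 := @hSP x
    simp only [Set.mem_diff, Set.mem_union, Set.mem_inter_iff]; tauto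
  have i9 : Sᶜ = (P \ S) ∪ Pᶜ := by
    ext x
    have hx := @hSP x
    simp only [Set.mem_compl_iff, Set.mem_union, Set.mem_diff]; tauto
  have i10 : (S ∩ B) ∪ (S \ B) = S := Set.inter_union_diff S B
  have i11 : (S ∩ B) ∪ (B \ S) = B := by
    ext x; simp only [Set.mem_union, Set.mem_inter_iff, Set.mem_diff]; tauto
  -- abbreviations (nat)
  set EinN := (EE G (S ∩ B) (B \ S)).ncard with hEinN
  set EoutN := (EE G (S ∩ B) Bᶜ).ncard with hEoutN
  set FoutN := (EE G (B \ S) Bᶜ).ncard with hFoutN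
  set aN := (EE G S (P \ S)).ncard with haN
  set aBN := (EE G (S ∩ B) (P \ S)).ncard with haBN
  set aPN := (EE G (S \ B) (P \ S)).ncard with haPN
  set gN := (EE G (S \ B) (S ∩ B)).ncard with hgN
  set cN := (EE G S Pᶜ).ncard with hcN
  -- disjointness facts
  have dSB_SP : Disjoint (S ∩ B) (S \ B) := Set.disjoint_left.2 fun a h h' => h'.2 h.2
  have dSB_Sb : Disjoint (S ∩ B) (B \ S) := Set.disjoint_left.2 fun a h h' => h'.2 h.1
  have dSb_Bc : Disjoint (B \ S) Bᶜ := Set.disjoint_left.2 fun a h h' => h' h.1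
  have dSB_Bc : Disjoint (S ∩ B) Bᶜ := Set.disjoint_left.2 fun a h h' => h' h.2
  have dSb_SB : Disjoint (B \ S) (S ∩ B) := dSB_Sb.symm
  have dPS_SB : Disjoint (P \ S) (S ∩ B) := Set.disjoint_left.2 fun a h h' => h.2 h'.1
  have dPS_SP : Disjoint (P \ S) (S \ B) := Set.disjoint_left.2 fun a h h' => h.2 h'.1
  have dS_PS : Disjoint S (P \ S) := Set.disjoint_left.2 fun a h h' => h'.2 h
  have dPS_Pc : Disjoint (P \ S) Pᶜ := Set.disjoint_left.2 fun a h h' => h' h.1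
  -- counting facts (ℕ)
  have F0 : vol G S = vol G (S ∩ B) + vol G (S \ B) := by
    conv_lhs => rw [← i10]
    exact vol_union G dSB_SP
  have F1 : aN = aBN + aPN := by
    have h := EE_ncard_union G dPS_SB dSB_SP
    rw [i10] at h
    rw [haN, haBN, haPN, EE_symm G S, EE_symm G (S ∩ B), EE_symm G (S \ B)]
    exact h
  have F2 : EinN ≤ aBN :=
    Set.ncard_le_ncard (EE_mono G _ fun x hx => ⟨hBP hx.1, hx.2⟩) (Set.toFinite _)
  have F3 : (bdry G (S ∩ B)).ncard = EinN + EoutN := by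
    rw [bdry_eq_EE, i5]
    exact EE_ncard_union G dSB_Sb dSb_Bc
  have F4 : (bdry G (B \ S)).ncard = EinN + FoutN := by
    rw [bdry_eq_EE, i6]
    rw [EE_ncard_union G dSb_SB dSB_Bc, EE_symm G (B \ S) (S ∩ B)]
  have F5 : eCount G (S ∩ B) B = EinN := by rw [eCount_eq, i1]
  have F6 : eCount G (B \ S) B = EinN := by rw [eCount_eq, i3, EE_symm]
  have F7 : eCount G (S ∩ B) (Set.univ \ B) = EoutN := by rw [eCount_eq, i2]
  have F8 : eCount G (B \ S) (Set.univ \ B) = FoutN := by rw [eCount_eq, i4]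
  have F9 : eCount G (S \ B) Set.univ = (bdry G (S \ B)).ncard := by
    rw [eCount_eq, i7, bdry_eq_EE]
  have F10 : eCount G (S \ B) P = aPN + gN := by
    rw [eCount_eq, i8]
    exact EE_ncard_union G dPS_SP.symm dPS_SB
  have F11 : gN ≤ EoutN := by
    rw [hgN, EE_symm]
    exact Set.ncard_le_ncard (EE_mono G _ fun x hx => hx.2) (Set.toFinite _)
  have F12 : vol G B = vol G (S ∩ B) + vol G (B \ S) := by
    conv_lhs => rw [← i11]
    exact vol_union G dSB_Sb
  have F13 : vol G S = vol (restrict G P) S + cN := vol_restrict_add G hSP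
  have F14 : aN ≤ vol (restrict G P) S := EE_le_vol_restrict G hSP
  have F15 : (bdry G S).ncard = aN + cN := by
    rw [bdry_eq_EE, i9]
    exact EE_ncard_union G dS_PS dPS_Pc
  -- real abbreviations
  set t : ℝ := (vol G (S ∩ B) : ℝ) with ht
  set T : ℝ := (vol G B : ℝ) with hT
  set sP : ℝ := (vol G (S \ B) : ℝ) with hsP
  set bR : ℝ := (vol G S : ℝ) with hbR
  set rR : ℝ := (vol (restrict G P) S : ℝ) with hrR
  set Ein : ℝ := (EinN : ℝ) with hEin
  set Eout : ℝ := (EoutN : ℝ) with hEout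
  set Fout : ℝ := (FoutN : ℝ) with hFout
  set aR : ℝ := (aN : ℝ) with haR
  set aB : ℝ := (aBN : ℝ) with haB
  set aP : ℝ := (aPN : ℝ) with haP
  set gR : ℝ := (gN : ℝ) with hgR
  set cR : ℝ := (cN : ℝ) with hcR
  have hEin0 : (0:ℝ) ≤ Ein := Nat.cast_nonneg _
  have hEout0 : (0:ℝ) ≤ Eout := Nat.cast_nonneg _
  have hFout0 : (0:ℝ) ≤ Fout := Nat.cast_nonneg _
  have haR0 : (0:ℝ) ≤ aR := Nat.cast_nonneg _
  have haB0 : (0:ℝ) ≤ aB := Nat.cast_nonneg _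
  have haP0 : (0:ℝ) ≤ aP := Nat.cast_nonneg _
  have hgR0 : (0:ℝ) ≤ gR := Nat.cast_nonneg _
  have hcR0 : (0:ℝ) ≤ cR := Nat.cast_nonneg _
  have ht0 : (0:ℝ) ≤ t := Nat.cast_nonneg _
  have hsP0 : (0:ℝ) ≤ sP := Nat.cast_nonneg _
  have hℓ0 : (0:ℝ) < ℓ := lt_of_lt_of_le one_pos hℓ
  have hF0R : bR = t + sP := by rw [hbR, F0]; push_cast; ring
  have hF1R : aR = aB + aP := by rw [haR, F1]; push_cast; ring
  have hF2R : Ein ≤ aB := Nat.cast_le.2 F2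
  have hF11R : gR ≤ Eout := Nat.cast_le.2 F11
  have hF12R : (vol G (B \ S) : ℝ) = T - t := by rw [hT, F12]; push_cast; ring
  have hF13R : bR = rR + cR := by rw [hbR, F13]; push_cast; ring
  have hF14R : aR ≤ rR := Nat.cast_le.2 F14
  -- Claim 1 : in case (S ∩ B) nonempty, ε * ξ * t ≤ 7 * Ein
  have claim1 : (S ∩ B).Nonempty → ε * ξ * t ≤ 7 * Ein ∧ ε * Eout ≤ 6 * Ein := by
    intro hSBne
    have htpos : (0:ℝ) < t := by
      rw [ht]; exact_mod_cast vol_pos G hiso hSBne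
    have h2' := h2 hSBne
    have hc1 : ε / 3 ≤ condPair G (S ∩ B) B := le_trans h2' (min_le_left _ _)
    have hc2 : ε / 3 ≤ condPair G (B \ S) B := le_trans h2' (min_le_right _ _)
    rw [condPair, F5, F7, i1] at hc1
    rw [condPair, F6, F8, i3] at hc2
    have hvolSBc : (vol G (S ∩ B) : ℝ) = t := rfl
    rw [hvolSBc] at hc2
    -- denominators must be positive
    have hd1 : (0:ℝ) < (vol G (B \ S) : ℝ) / T * Eout := by
      by_contra hcon
      push_neg at hcon
      have hz : (vol G (B \ S) : ℝ) / T * Eout = 0 := le_antisymm hcon (by positivity)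
      rw [hz, div_zero] at hc1
      linarith
    have hd2 : (0:ℝ) < t / T * Fout := by
      by_contra hcon
      push_neg at hcon
      have hz : t / T * Fout = 0 := le_antisymm hcon (by positivity)
      rw [hz, div_zero] at hc2
      linarith
    have hTpos : (0:ℝ) < T := by
      by_contra hcon
      push_neg at hcon
      have hT0 : T = 0 := le_antisymm hcon (by rw [hT]; positivity)
      rw [hT0, div_zero, zero_mul] at hd1
      exact lt_irrefl 0 hd1
    have hEoutpos : (0:ℝ) < Eout := by
      by_contra hcon
      push_neg at hcon
      have h0 : Eout = 0 := le_antisymm hcon hEout0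
      rw [h0, mul_zero] at hd1
      exact lt_irrefl 0 hd1
    have hFoutpos : (0:ℝ) < Fout := by
      by_contra hcon
      push_neg at hcon
      have h0 : Fout = 0 := le_antisymm hcon hFout0
      rw [h0, mul_zero] at hd2
      exact lt_irrefl 0 hd2
    have hTt : t ≤ T / 2 := hvolSB
    have hTtpos : (0:ℝ) < T - t := by linarith
    have hE1' : ε / 3 * ((vol G (B \ S) : ℝ) / T * Eout) ≤ Ein := (le_div_iff₀ hd1).1 hc1
    have hE1 : ε / 3 * ((T - t) / T * Eout) ≤ Ein := by rwa [hF12R] at hE1'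

    have hE2 : ε / 3 * (t / T * Fout) ≤ Ein := (le_div_iff₀ hd2).1 hc2
    have hmax := hξB hSBne
    rw [cond, cond, F3, F4, hvolSBc, hF12R] at hmax
    push_cast at hmax
    rw [← hEin, ← hEout, ← hFout] at hmax
    exact arith_claim1 hε0 hε1 hξ htpos hTt hTpos hEin0 hEoutpos hFoutpos hE1 hE2
      (le_max_iff.1 hmax)
  -- Claim 2 : in case (S \ B) nonempty, ξ * sP ≤ ℓ * (aP + gR)
  have claim2 : (S \ B).Nonempty → ξ * sP ≤ ℓ * (aP + gR) := by
    intro hSPne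
    have hsppos : (0:ℝ) < sP := by
      rw [hsP]; exact_mod_cast vol_pos G hiso hSPne
    have hx := hξP hSPne
    rw [cond] at hx
    have hx' : ξ * sP ≤ ((bdry G (S \ B)).ncard : ℝ) := by
      rw [← le_div_iff₀ hsppos]; exact hx
    have hy := h1 hSPne
    rw [F10] at hy
    have hy' : (eCount G (S \ B) Set.univ : ℝ) ≤ ℓ * (aP + gR) := by
      rw [div_le_iff₀ hℓ0] at hy
      calc (eCount G (S \ B) Set.univ : ℝ) ≤ ((aPN + gN : ℕ) : ℝ) * ℓ := hy
        _ = ℓ * (aP + gR) := by push_cast; ring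
    calc ξ * sP ≤ ((bdry G (S \ B)).ncard : ℝ) := hx'
      _ = (eCount G (S \ B) Set.univ : ℝ) := by rw [F9]
      _ ≤ ℓ * (aP + gR) := hy'
  -- main bound : ε * ξ * bR ≤ 14 * ℓ * aR
  have main : ε * ξ * bR ≤ 14 * ℓ * aR := by
    rcases (S ∩ B).eq_empty_or_nonempty with hSB | hSBne
    · -- S ∩ B = ∅ : S \ B = S is nonempty
      have hSPne : (S \ B).Nonempty := by
        obtain ⟨x, hx⟩ := hSne
        exact ⟨x, hx, fun hxB => (Set.eq_empty_iff_forall_notMem.1 hSB x) ⟨hx, hxB⟩⟩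
      have ht0' : t = 0 := by rw [ht, hSB, vol_empty]; norm_num
      have hg0 : gN = 0 := by rw [hgN, hSB, EE_empty, Set.ncard_empty]
      have hg0' : gR = 0 := by rw [hgR, hg0]; norm_num
      have c2 := claim2 hSPne
      rw [hg0', add_zero] at c2
      rw [hF0R, ht0', zero_add, hF1R]
      exact arith_caseA hε0 hε1 hξ hℓ hsP0 haB0 haP0 c2
    · rcases (S \ B).eq_empty_or_nonempty with hSPe | hSPne
      · -- S \ B = ∅
        have hsP0' : sP = 0 := by rw [hsP, hSPe, vol_empty]; norm_num
        obtain ⟨c1, _⟩ := claim1 hSBne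
        rw [hF0R, hsP0', add_zero, hF1R]
        exact arith_caseB hℓ haB0 haP0 c1 hF2R
      · -- both nonempty
        obtain ⟨c1, e1⟩ := claim1 hSBne
        have c2 := claim2 hSPne
        rw [hF0R, hF1R]
        exact arith_caseC hε0 hε1 hξ hℓ ht0 hsP0 hEin0 hEout0 haB0 haP0 hgR0 c1 e1 c2
          hF11R hF2R
  -- conclude
  have hbpos : (0:ℝ) < bR := by
    rw [hbR]; exact_mod_cast vol_pos G hiso hSne
  have hapos : (0:ℝ) < aR := by
    refine arith_pos_aux (x := 14 * ℓ) (by linarith) ?_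
    calc (0:ℝ) < ε * ξ * bR := by positivity
      _ ≤ 14 * ℓ * aR := main
  have hrpos : (0:ℝ) < rR := lt_of_lt_of_le hapos hF14R
  have hcondr : cond (restrict G P) S = aR / rR := by
    rw [cond, bdry_restrict_eq_EE G hSP]
  have hcondG : cond G S = (aR + cR) / bR := by
    rw [cond, F15, haR, hcR, hbR]; push_cast; ring
  constructor
  · rw [hcondr, hcondG, div_le_div_iff₀ hrpos hbpos, hF13R]
    exact arith_concl1 haR0 hcR0 hF14R
  · rw [hcondr, div_le_div_iff₀ (by linarith : (0:ℝ) < 14 * ℓ) hrpos]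
    have hrb : rR ≤ bR := by linarith
    exact arith_concl2 hε0 hξ hrb main


end Paper

end
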